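/- arXiv:2001.07790 — 2 statements merged into one kernel-verified Lean document; each statement's English description precedes it below -/
import Mathlib

section
/- Let σ² > 0, τ > τ* > 0, and set w_0 = σ^{-2}/(τ+σ^{-2}), w*_0 = σ^{-2}/(τ*+σ^{-2}), σ_0² = (τ+σ^{-2})^{-1}, σ_1² = (τ+2σ^{-2})^{-1}, σ*_0² = (τ*+σ^{-2})^{-1}, σ*_1² = (τ*+2σ^{-2})^{-1}. Then (1 + σ*_0²/σ*_1²)·w_0 − (1 + σ_0²/σ_1²)·w*_0 = 2σ^{-2}(τ* − τ)/((τ+σ^{-2})(τ*+σ^{-2})), and in particular this quantity is strictly negative. -/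
/-- Key identity for counter-cyclicality (young cohort terms):
`(1 + σ*₀²/σ*₁²)·w₀ − (1 + σ₀²/σ₁²)·w*₀ = 2σ⁻²(τ* − τ)/((τ+σ⁻²)(τ*+σ⁻²)) < 0`. -/
theorem young_cohort_identity
    (σ2 τ τs : ℝ) (hσ : 0 < σ2) (hτs : 0 < τs) (hττ : τs < τ) :
    (1 + (τs + σ2⁻¹)⁻¹ / (τs + 2 * σ2⁻¹)⁻¹) * (σ2⁻¹ / (τ + σ2⁻¹))
      - (1 + (τ + σ2⁻¹)⁻¹ / (τ + 2 * σ2⁻¹)⁻¹) * (σ2⁻¹ / (τs + σ2⁻¹))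
      = 2 * σ2⁻¹ * (τs - τ) / ((τ + σ2⁻¹) * (τs + σ2⁻¹))
    ∧ (1 + (τs + σ2⁻¹)⁻¹ / (τs + 2 * σ2⁻¹)⁻¹) * (σ2⁻¹ / (τ + σ2⁻¹))
      - (1 + (τ + σ2⁻¹)⁻¹ / (τ + 2 * σ2⁻¹)⁻¹) * (σ2⁻¹ / (τs + σ2⁻¹)) < 0 := by
  have hτ : 0 < τ := hτs.trans hττ
  have hs : 0 < σ2⁻¹ := inv_pos.2 hσ
  have h1 : 0 < τ + σ2⁻¹ := by positivity
  have h2 : 0 < τs + σ2⁻¹ := by positivity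
  have h3 : 0 < τ + 2 * σ2⁻¹ := by positivity
  have h4 : 0 < τs + 2 * σ2⁻¹ := by positivity
  have heq : (1 + (τs + σ2⁻¹)⁻¹ / (τs + 2 * σ2⁻¹)⁻¹) * (σ2⁻¹ / (τ + σ2⁻¹))
      - (1 + (τ + σ2⁻¹)⁻¹ / (τ + 2 * σ2⁻¹)⁻¹) * (σ2⁻¹ / (τs + σ2⁻¹))
      = 2 * σ2⁻¹ * (τs - τ) / ((τ + σ2⁻¹) * (τs + σ2⁻¹)) := by
    set s := σ2⁻¹ with hsdef
    field_simp [h1.ne', h2.ne', h3.ne', h4.ne']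
    ring
  refine ⟨heq, ?_⟩
  rw [heq]
  apply div_neg_of_neg_of_pos
  · nlinarith
  · positivity
end

section
/- Equal demographics imply counter-cyclical domestic holdings: let σ² > 0, τ > τ* > 0, and φ > 0, with w_0, w_1ω, w*_0, w*_1ω and σ_0², σ_1², σ*_0², σ*_1² as defined from τ, τ*, σ². Then the quantity (φ²/(σ_0²σ*_0²))[(1+σ*_0²/σ*_1²)w_0 − (1+σ_0²/σ_1²)w*_0] + (φ²/(σ_1²σ*_1²))[(1+σ*_1²/σ*_0²)w_1ω − (1+σ_1²/σ_0²)w*_1ω] is strictly negative. -/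
/-- With equal demographics, the sensitivity of domestic holdings of the domestic
asset to current domestic output is strictly negative (retrenchment after busts). -/
theorem equal_demographics_countercyclical
    (σ2 τ τs φ : ℝ) (hσ : 0 < σ2) (hτs : 0 < τs) (hττ : τs < τ) (hφ : 0 < φ) :
    (φ ^ 2 / ((τ + σ2⁻¹)⁻¹ * (τs + σ2⁻¹)⁻¹)) *
        ((1 + (τs + σ2⁻¹)⁻¹ / (τs + 2 * σ2⁻¹)⁻¹) * (σ2⁻¹ / (τ + σ2⁻¹))
          - (1 + (τ + σ2⁻¹)⁻¹ / (τ + 2 * σ2⁻¹)⁻¹) * (σ2⁻¹ / (τs + σ2⁻¹)))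
      + (φ ^ 2 / ((τ + 2 * σ2⁻¹)⁻¹ * (τs + 2 * σ2⁻¹)⁻¹)) *
        ((1 + (τs + 2 * σ2⁻¹)⁻¹ / (τs + σ2⁻¹)⁻¹) * (σ2⁻¹ / (τ + 2 * σ2⁻¹))
          - (1 + (τ + 2 * σ2⁻¹)⁻¹ / (τ + σ2⁻¹)⁻¹) * (σ2⁻¹ / (τs + 2 * σ2⁻¹))) < 0 := by
  set s := σ2⁻¹ with hsdef
  have hs : 0 < s := inv_pos.mpr hσ
  have ha : 0 < τ + s := by linarith
  have hb : 0 < τ + 2 * s := by linarith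
  have hc : 0 < τs + s := by linarith
  have hd : 0 < τs + 2 * s := by linarith
  have key : (φ ^ 2 / ((τ + s)⁻¹ * (τs + s)⁻¹)) *
        ((1 + (τs + s)⁻¹ / (τs + 2 * s)⁻¹) * (s / (τ + s))
          - (1 + (τ + s)⁻¹ / (τ + 2 * s)⁻¹) * (s / (τs + s)))
      + (φ ^ 2 / ((τ + 2 * s)⁻¹ * (τs + 2 * s)⁻¹)) *
        ((1 + (τs + 2 * s)⁻¹ / (τs + s)⁻¹) * (s / (τ + 2 * s))
          - (1 + (τ + 2 * s)⁻¹ / (τ + s)⁻¹) * (s / (τs + 2 * s)))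
      = 4 * φ ^ 2 * s * (τs - τ) := by
    have hb2 : τ + s * 2 ≠ 0 := by linarith
    field_simp
    simp only [mul_sub, mul_add, mul_one, mul_div_cancel₀ _ hb2]
    ring
  rw [key]
  have h1 : τs - τ < 0 := by linarith
  have h2 : 0 < 4 * φ ^ 2 * s := by positivity
  nlinarith
end
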